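/- Let G be a graph obtained from the complete graph K_n by removing a matching of size p. Then G is (n−p)-choosable: for every list assignment giving each vertex at least n−p colours, G has a proper colouring from the lists. -/

import Mathlib

open Finset

private lemma hall_case {V : Type*} [DecidableEq V] (A : Finset V) (M : Finset (V × V))
    (hMe : ∀ e ∈ M, e.1 ∈ A ∧ e.2 ∈ A ∧ e.1 ≠ e.2)
    (hM2 : ∀ e ∈ M, ∀ f ∈ M, e ≠ f →
      e.1 ≠ f.1 ∧ e.1 ≠ f.2 ∧ e.2 ≠ f.1 ∧ e.2 ≠ f.2)
    (L : V → Finset ℕ)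
    (hdisj : ∀ e ∈ M, Disjoint (L e.1) (L e.2))
    (hL : ∀ v ∈ A, A.card - M.card ≤ (L v).card) :
    ∃ c : V → ℕ, (∀ v ∈ A, c v ∈ L v) ∧ ∀ u ∈ A, ∀ v ∈ A, u ≠ v → c u ≠ c v := by
  classical
  -- the 2p endpoints are distinct, hence 2p ≤ |A|
  have h2p : 2 * M.card ≤ A.card := by
    have hE : (M.biUnion fun e => ({e.1, e.2} : Finset V)) ⊆ A := by
      intro x hx
      simp only [mem_biUnion, mem_insert, mem_singleton] at hx
      obtain ⟨e, he, hx⟩ := hx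
      rcases hx with h | h <;> subst h
      · exact (hMe e he).1
      · exact (hMe e he).2.1
    have hcard : (M.biUnion fun e => ({e.1, e.2} : Finset V)).card = 2 * M.card := by
      rw [card_biUnion]
      · rw [Finset.sum_congr rfl (fun e he => by
          rw [card_insert_of_notMem (by simp [(hMe e he).2.2]), card_singleton]),
          Finset.sum_const, smul_eq_mul, mul_comm]
      · intro e he f hf hef
        obtain ⟨h1, h2, h3, h4⟩ := hM2 e he f hf hef
        simp only [Finset.disjoint_left, mem_insert, mem_singleton]
        rintro x (rfl | rfl) <;> simp_all
    calc 2 * M.card = (M.biUnion fun e => ({e.1, e.2} : Finset V)).card := hcard.symm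
    _ ≤ A.card := card_le_card hE
  -- Hall's condition
  have hall : ∀ s : Finset ↥A, s.card ≤ (s.biUnion fun v => L v.val).card := by
    intro s
    obtain ⟨S, hS⟩ : ∃ S : Finset V, S = s.image Subtype.val := ⟨_, rfl⟩
    have hScard : S.card = s.card := by rw [hS]; exact card_image_of_injective _ Subtype.val_injective
    have hSA : S ⊆ A := by
      intro x hx
      simp only [hS, mem_image] at hx
      obtain ⟨v, _, rfl⟩ := hx
      exact v.2
    have hsub : S.biUnion L ⊆ s.biUnion fun v => L v.val := by
      intro x hx
      simp only [mem_biUnion] at hx ⊢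
      obtain ⟨v, hv, hx⟩ := hx
      simp only [hS, mem_image] at hv
      obtain ⟨w, hw, rfl⟩ := hv
      exact ⟨w, hw, hx⟩
    rcases s.eq_empty_or_nonempty with rfl | ⟨v, hv⟩
    · simp
    rcases le_or_gt s.card (A.card - M.card) with hle | hlt
    · have : L v.val ⊆ s.biUnion fun v => L v.val := by
        intro x hx
        simp only [mem_biUnion]
        exact ⟨v, hv, hx⟩
      calc s.card ≤ A.card - M.card := hle
      _ ≤ (L v.val).card := hL v.val v.2
      _ ≤ _ := card_le_card this
    · -- S contains both ends of some matched pair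
      have hpair : ∃ e ∈ M, e.1 ∈ S ∧ e.2 ∈ S := by
        by_contra h
        push_neg at h
        have hinj : M.card ≤ (A \ S).card := by
          apply card_le_card_of_injOn (fun e => if e.1 ∈ S then e.2 else e.1)
          · intro e he
            by_cases h1 : e.1 ∈ S
            · simp only [if_pos h1, mem_sdiff]
              exact mem_sdiff.mpr ⟨(hMe e he).2.1, h e he h1⟩
            · simp only [if_neg h1, mem_sdiff]
              exact mem_sdiff.mpr ⟨(hMe e he).1, h1⟩
          · intro e he f hf hef
            by_contra hne
            obtain ⟨h1, h2, h3, h4⟩ := hM2 e he f hf hne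
            dsimp only at hef
            split_ifs at hef
            · exact h4 hef
            · exact h3 hef
            · exact h2 hef
            · exact h1 hef
        have hSle : S.card ≤ A.card := card_le_card hSA
        rw [card_sdiff_of_subset hSA] at hinj
        omega
      obtain ⟨e, heM, h1, h2⟩ := hpair
      have hU : L e.1 ∪ L e.2 ⊆ s.biUnion fun v => L v.val := by
        apply Finset.union_subset <;> intro x hx <;> apply hsub <;>
          simp only [mem_biUnion]
        · exact ⟨e.1, h1, hx⟩
        · exact ⟨e.2, h2, hx⟩
      have hUc : (L e.1 ∪ L e.2).card = (L e.1).card + (L e.2).card :=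
        card_union_of_disjoint (hdisj e heM)
      have hL1 := hL e.1 (hMe e heM).1
      have hL2 := hL e.2 (hMe e heM).2.1
      have hsA : s.card = S.card := hScard.symm
      have hSle : S.card ≤ A.card := card_le_card hSA
      have := card_le_card hU
      omega
  obtain ⟨f, hfinj, hf⟩ := (Finset.all_card_le_biUnion_card_iff_exists_injective
    (fun v : ↥A => L v.val)).mp hall
  refine ⟨fun x => if h : x ∈ A then f ⟨x, h⟩ else 0, ?_, ?_⟩
  · intro v hv
    simp only [dif_pos hv]
    exact hf ⟨v, hv⟩
  · intro u hu v hv huv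
    simp only [dif_pos hu, dif_pos hv]
    intro h
    exact huv (congrArg Subtype.val (hfinj h))

private lemma aux_lemma {V : Type*} [DecidableEq V] :
    ∀ (p : ℕ) (A : Finset V) (M : Finset (V × V)),
      M.card = p →
      (∀ e ∈ M, e.1 ∈ A ∧ e.2 ∈ A ∧ e.1 ≠ e.2) →
      (∀ e ∈ M, ∀ f ∈ M, e ≠ f →
        e.1 ≠ f.1 ∧ e.1 ≠ f.2 ∧ e.2 ≠ f.1 ∧ e.2 ≠ f.2) →
      ∀ L : V → Finset ℕ, (∀ v ∈ A, A.card - p ≤ (L v).card) →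
      ∃ c : V → ℕ, (∀ v ∈ A, c v ∈ L v) ∧
        ∀ u ∈ A, ∀ v ∈ A, u ≠ v → (u, v) ∉ M → (v, u) ∉ M → c u ≠ c v := by
  intro p
  induction p with
  | zero =>
    intro A M hp hMe hM2 L hL
    obtain ⟨c, hc1, hc2⟩ := hall_case A M hMe hM2 L
      (fun e he => absurd (card_eq_zero.mp hp ▸ he) (notMem_empty e))
      (by rwa [hp])
    exact ⟨c, hc1, fun u hu v hv huv _ _ => hc2 u hu v hv huv⟩
  | succ q ih =>
    intro A M hp hMe hM2 L hL
    by_cases hex : ∃ e ∈ M, (L e.1 ∩ L e.2).Nonempty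
    · obtain ⟨e, heM, a, ha⟩ := hex
      rw [mem_inter] at ha
      obtain ⟨A', hA'⟩ : ∃ A' : Finset V, A' = A \ {e.1, e.2} := ⟨_, rfl⟩
      obtain ⟨M', hM'⟩ : ∃ M' : Finset (V × V), M' = M.erase e := ⟨_, rfl⟩
      have hA'card : A'.card = A.card - 2 := by
        rw [hA', card_sdiff_of_subset (by
          intro x hx
          simp only [mem_insert, mem_singleton] at hx
          rcases hx with rfl | rfl
          · exact (hMe e heM).1
          · exact (hMe e heM).2.1)]
        rw [card_insert_of_notMem (by simp [(hMe e heM).2.2]), card_singleton]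
      have hMeA' : ∀ f ∈ M', f.1 ∈ A' ∧ f.2 ∈ A' ∧ f.1 ≠ f.2 := by
        intro f hf
        have hfM := mem_of_mem_erase (hM' ▸ hf)
        have hfe : f ≠ e := ne_of_mem_erase (hM' ▸ hf)
        obtain ⟨h1, h2, h3, h4⟩ := hM2 f hfM e heM hfe
        refine ⟨?_, ?_, (hMe f hfM).2.2⟩
        · simp only [hA', mem_sdiff, mem_insert, mem_singleton]
          exact ⟨(hMe f hfM).1, by tauto⟩
        · simp only [hA', mem_sdiff, mem_insert, mem_singleton]
          exact ⟨(hMe f hfM).2.1, by tauto⟩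
      have hM2' : ∀ f ∈ M', ∀ g ∈ M', f ≠ g →
          f.1 ≠ g.1 ∧ f.1 ≠ g.2 ∧ f.2 ≠ g.1 ∧ f.2 ≠ g.2 :=
        fun f hf g hg => hM2 f (mem_of_mem_erase (hM' ▸ hf)) g (mem_of_mem_erase (hM' ▸ hg))
      have hM'card : M'.card = q := by
        rw [hM', card_erase_of_mem heM, hp]
        omega
      obtain ⟨c', hc'1, hc'2⟩ := ih A' M' hM'card hMeA' hM2'
        (fun x => (L x).erase a)
        (by
          intro v hv
          rw [hA', mem_sdiff] at hv
          have := hL v hv.1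
          have h1 : (L v).card - 1 ≤ ((L v).erase a).card := pred_card_le_card_erase
          omega)
      refine ⟨fun x => if x = e.1 ∨ x = e.2 then a else c' x, ?_, ?_⟩
      · intro v hv
        dsimp only
        by_cases h : v = e.1 ∨ v = e.2
        · rw [if_pos h]
          rcases h with rfl | rfl
          · exact ha.1
          · exact ha.2
        · rw [if_neg h]
          push_neg at h
          have hv' : v ∈ A' := by
            simp only [hA', mem_sdiff, mem_insert, mem_singleton]
            tauto
          exact mem_of_mem_erase (hc'1 v hv')
      · intro u hu v hv huv hMuv hMvu
        dsimp only
        by_cases h1 : u = e.1 ∨ u = e.2 <;> by_cases h2 : v = e.1 ∨ v = e.2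
        · exfalso
          rcases h1 with rfl | rfl <;> rcases h2 with rfl | rfl
          · exact huv rfl
          · exact hMuv heM
          · exact hMvu heM
          · exact huv rfl
        · rw [if_pos h1, if_neg h2]
          push_neg at h2
          have hv' : v ∈ A' := by
            simp only [hA', mem_sdiff, mem_insert, mem_singleton]; tauto
          exact fun hh => (notMem_erase a (L v)) (hh ▸ hc'1 v hv')
        · rw [if_neg h1, if_pos h2]
          push_neg at h1
          have hu' : u ∈ A' := by
            simp only [hA', mem_sdiff, mem_insert, mem_singleton]; tauto
          exact fun hh => (notMem_erase a (L u)) (hh ▸ hc'1 u hu')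
        · rw [if_neg h1, if_neg h2]
          push_neg at h1; push_neg at h2
          have hu' : u ∈ A' := by
            simp only [hA', mem_sdiff, mem_insert, mem_singleton]; tauto
          have hv' : v ∈ A' := by
            simp only [hA', mem_sdiff, mem_insert, mem_singleton]; tauto
          exact hc'2 u hu' v hv' huv (fun h => hMuv (mem_of_mem_erase (hM' ▸ h)))
            (fun h => hMvu (mem_of_mem_erase (hM' ▸ h)))
    · push_neg at hex
      obtain ⟨c, hc1, hc2⟩ := hall_case A M hMe hM2 L
        (fun e he => disjoint_left.mpr fun {x} hx1 hx2 =>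
          (not_nonempty_iff_eq_empty.mpr (hex e he)) ⟨x, mem_inter.mpr ⟨hx1, hx2⟩⟩)
        (by rwa [hp])
      exact ⟨c, hc1, fun u hu v hv huv _ _ => hc2 u hu v hv huv⟩

theorem stmt_6 {V : Type*} [Fintype V] [DecidableEq V] (n p : ℕ)
    (hn : Fintype.card V = n)
    (M : Finset (V × V)) (hp : M.card = p)
    (hM1 : ∀ e ∈ M, e.1 ≠ e.2)
    (hM2 : ∀ e ∈ M, ∀ f ∈ M, e ≠ f →
      e.1 ≠ f.1 ∧ e.1 ≠ f.2 ∧ e.2 ≠ f.1 ∧ e.2 ≠ f.2)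
    (G : SimpleGraph V)
    (hG : ∀ u v, G.Adj u v ↔ u ≠ v ∧ (u, v) ∉ M ∧ (v, u) ∉ M)
    (L : V → Finset ℕ) (hL : ∀ v, n - p ≤ (L v).card) :
    ∃ c : V → ℕ, (∀ v, c v ∈ L v) ∧ ∀ u v, G.Adj u v → c u ≠ c v := by
  obtain ⟨c, hc1, hc2⟩ := aux_lemma p (Finset.univ : Finset V) M hp
    (fun e he => ⟨mem_univ _, mem_univ _, hM1 e he⟩) hM2 L
    (by
      intro v _
      rw [Finset.card_univ, hn]
      exact hL v)
  refine ⟨c, fun v => hc1 v (mem_univ v), fun u v huv => ?_⟩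
  rw [hG] at huv
  exact hc2 u (mem_univ u) v (mem_univ v) huv.1 huv.2.1 huv.2.2
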